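/- Let I ⊆ K[x₁,…,xₙ] be a zero-dimensional ideal and ≻ a monomial ordering such that the set of leading monomials LM(I) is stable. Fix ℓ ∈ {1,…,n} and let m be a monomial in K[x₁,…,x_{ℓ−1}] not in LM(I). Then there exists a minimal integer α ≥ 1 such that m·x_ℓ^α ∈ LM(I), and m·x_ℓ^α is the leading monomial of an element of the reduced ≻-Gröbner basis of I whose leading monomial lies in K[x₁,…,x_ℓ] but not in K[x₁,…,x_{ℓ−1}]. -/

import Mathlib

open MvPolynomial

/-- A monomial `μ` is the leading monomial of `f` with respect to the strict order `lt`
on exponent vectors. -/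
def IsLM {K : Type*} [Field K] {n : ℕ}
    (lt : (Fin n →₀ ℕ) → (Fin n →₀ ℕ) → Prop)
    (f : MvPolynomial (Fin n) K) (μ : Fin n →₀ ℕ) : Prop :=
  μ ∈ f.support ∧ ∀ ν ∈ f.support, ν = μ ∨ lt ν μ

/-- The set of leading monomials of nonzero elements of an ideal. -/
def LMset {K : Type*} [Field K] {n : ℕ}
    (lt : (Fin n →₀ ℕ) → (Fin n →₀ ℕ) → Prop)
    (I : Ideal (MvPolynomial (Fin n) K)) : Set (Fin n →₀ ℕ) :=
  {μ | ∃ f ∈ I, IsLM lt f μ}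

/-- A set of monomials is stable: if `m ∈ S` and `xᵢ ∣ m` then `(xⱼ·m)/xᵢ ∈ S`
for all `j < i`. -/
def StableSet {n : ℕ} (S : Set (Fin n →₀ ℕ)) : Prop :=
  ∀ μ ∈ S, ∀ i : Fin n, μ i ≠ 0 → ∀ j : Fin n, j < i →
    μ - Finsupp.single i 1 + Finsupp.single j 1 ∈ S

/-- `G` is the reduced Gröbner basis of `I` with respect to the monomial order `lt`. -/
def IsReducedGB {K : Type*} [Field K] {n : ℕ}
    (lt : (Fin n →₀ ℕ) → (Fin n →₀ ℕ) → Prop)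
    (I : Ideal (MvPolynomial (Fin n) K)) (G : Set (MvPolynomial (Fin n) K)) : Prop :=
  G.Finite ∧
  (∀ g ∈ G, g ≠ 0 ∧ g ∈ I) ∧
  (∀ f ∈ I, f ≠ 0 → ∃ g ∈ G, ∃ μ ν, IsLM lt g μ ∧ IsLM lt f ν ∧ μ ≤ ν) ∧
  (∀ g ∈ G, ∀ μ, IsLM lt g μ → g.coeff μ = 1) ∧
  (∀ g ∈ G, ∀ g' ∈ G, g ≠ g' → ∀ μ ν, IsLM lt g' μ → ν ∈ g.support → ¬ μ ≤ ν)

section AuxLemmas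

variable {K : Type*} [Field K] {n : ℕ}
variable {lt : (Fin n →₀ ℕ) → (Fin n →₀ ℕ) → Prop}

lemma exists_max_aux {σ : Type*} (lt : σ → σ → Prop)
    (hlin : ∀ a b, a = b ∨ lt a b ∨ lt b a)
    (htrans : ∀ a b c, lt a b → lt b c → lt a c)
    (s : Finset σ) (hs : s.Nonempty) : ∃ μ ∈ s, ∀ ν ∈ s, ν = μ ∨ lt ν μ := by
  classical
  induction s using Finset.induction_on with
  | empty => exact absurd hs (by simp)
  | @insert a s ha ih =>
    rcases s.eq_empty_or_nonempty with rfl | hsne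
    · exact ⟨a, by simp, by simp⟩
    · obtain ⟨μ, hμs, hμ⟩ := ih hsne
      rcases hlin a μ with rfl | h | h
      · refine ⟨a, Finset.mem_insert_self _ _, ?_⟩
        intro ν hν
        rcases Finset.mem_insert.1 hν with rfl | hν
        · exact Or.inl rfl
        · exact hμ ν hν
      · exact ⟨μ, Finset.mem_insert_of_mem hμs, by
          intro ν hν
          rcases Finset.mem_insert.1 hν with rfl | hν
          · exact Or.inr h
          · exact hμ ν hν⟩
      · refine ⟨a, Finset.mem_insert_self _ _, ?_⟩
        intro ν hν
        rcases Finset.mem_insert.1 hν with rfl | hν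
        · exact Or.inl rfl
        · rcases hμ ν hν with rfl | h'
          · exact Or.inr h
          · exact Or.inr (htrans _ _ _ h' h)

lemma exists_isLM_aux
    (hlin : ∀ a b, a = b ∨ lt a b ∨ lt b a)
    (htrans : ∀ a b c, lt a b → lt b c → lt a c)
    (f : MvPolynomial (Fin n) K) (hf : f ≠ 0) : ∃ μ, IsLM lt f μ := by
  obtain ⟨μ, h1, h2⟩ := exists_max_aux lt hlin htrans f.support
    (by rw [MvPolynomial.support_nonempty]; exact hf)
  exact ⟨μ, h1, h2⟩

lemma isLM_unique_aux (hirr : ∀ a, ¬ lt a a)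
    (htrans : ∀ a b c, lt a b → lt b c → lt a c)
    {f : MvPolynomial (Fin n) K} {μ ν : Fin n →₀ ℕ}
    (h1 : IsLM lt f μ) (h2 : IsLM lt f ν) : μ = ν := by
  rcases h1.2 ν h2.1 with rfl | h
  · rfl
  rcases h2.2 μ h1.1 with rfl | h'
  · rfl
  exact absurd (htrans _ _ _ h h') (hirr _)

lemma LMset_add_aux (hadd : ∀ a b c, lt a b → lt (a + c) (b + c))
    {I : Ideal (MvPolynomial (Fin n) K)} {μ : Fin n →₀ ℕ}
    (hμ : μ ∈ LMset lt I) (δ : Fin n →₀ ℕ) : μ + δ ∈ LMset lt I := by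
  obtain ⟨f, hfI, hfs, hfm⟩ := hμ
  refine ⟨monomial δ 1 * f, I.mul_mem_left _ hfI, ?_, ?_⟩
  · rw [mem_support_iff, add_comm μ δ, coeff_monomial_mul, one_mul]
    exact mem_support_iff.1 hfs
  · intro ν hν
    rw [mem_support_iff, coeff_monomial_mul'] at hν
    split_ifs at hν with hle
    · rw [one_mul] at hν
      have h0 : ν - δ ∈ f.support := mem_support_iff.2 hν
      have hνeq : ν = (ν - δ) + δ := (tsub_add_cancel_of_le hle).symm
      rcases hfm _ h0 with he | hlt
      · exact Or.inl (by rw [hνeq, he])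
      · exact Or.inr (by rw [hνeq]; exact hadd _ _ _ hlt)
    · exact absurd rfl hν

lemma exists_pow_LMaux
    (lt : (Fin n →₀ ℕ) → (Fin n →₀ ℕ) → Prop)
    (I : Ideal (MvPolynomial (Fin n) K))
    (hI : FiniteDimensional K (MvPolynomial (Fin n) K ⧸ I)) (ℓ : Fin n) :
    ∃ p : MvPolynomial (Fin n) K, p ∈ I ∧ p ≠ 0 ∧
      ∀ μ ∈ p.support, ∃ N : ℕ, μ = Finsupp.single ℓ N := by
  classical
  have hnli : ¬ LinearIndependent K
      (fun k : ℕ => Ideal.Quotient.mk I (X ℓ ^ k : MvPolynomial (Fin n) K)) := by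
    intro h
    have h2 := h.lt_aleph0_of_finiteDimensional
    rw [Cardinal.mk_nat] at h2
    exact lt_irrefl _ h2
  rw [linearIndependent_iff] at hnli
  push_neg at hnli
  obtain ⟨l, hl0, hlne⟩ := hnli
  refine ⟨∑ k ∈ l.support, monomial (Finsupp.single ℓ k) (l k), ?_, ?_, ?_⟩
  · rw [← Ideal.Quotient.eq_zero_iff_mem, ← Ideal.Quotient.mkₐ_eq_mk K, map_sum]
    rw [Finsupp.linearCombination_apply, Finsupp.sum] at hl0
    rw [← hl0]
    refine Finset.sum_congr rfl fun k _ => ?_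
    rw [X_pow_eq_monomial, ← Ideal.Quotient.mkₐ_eq_mk K, ← map_smul, smul_monomial,
      smul_eq_mul, mul_one]
  · obtain ⟨k0, hk0⟩ := Finsupp.support_nonempty_iff.2 hlne
    intro hp0
    have hc : coeff (Finsupp.single ℓ k0) (∑ k ∈ l.support,
        monomial (Finsupp.single ℓ k) (l k)) = l k0 := by
      rw [coeff_sum]
      rw [Finset.sum_eq_single_of_mem k0 hk0]
      · rw [coeff_monomial, if_pos rfl]
      · intro k _ hkne
        rw [coeff_monomial, if_neg]
        intro he
        exact hkne (by simpa [Finsupp.single_eq_same] using DFunLike.congr_fun he ℓ)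
    rw [hp0] at hc
    simp at hc
    exact Finsupp.mem_support_iff.1 hk0 hc.symm
  · intro μ hμ
    by_contra hcon
    push_neg at hcon
    rw [mem_support_iff, coeff_sum] at hμ
    refine hμ (Finset.sum_eq_zero fun k _ => ?_)
    rw [coeff_monomial, if_neg]
    exact fun he => hcon k he.symm

end AuxLemmas

theorem stmt_3 {K : Type*} [Field K] {n : ℕ}
    (lt : (Fin n →₀ ℕ) → (Fin n →₀ ℕ) → Prop)
    (hlin : ∀ a b, a = b ∨ lt a b ∨ lt b a)
    (htrans : ∀ a b c, lt a b → lt b c → lt a c)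
    (hirr : ∀ a, ¬ lt a a)
    (hadd : ∀ a b c, lt a b → lt (a + c) (b + c))
    (hzero : ∀ a : Fin n →₀ ℕ, a ≠ 0 → lt 0 a)
    (I : Ideal (MvPolynomial (Fin n) K))
    (hI : FiniteDimensional K (MvPolynomial (Fin n) K ⧸ I))
    (hstable : StableSet (LMset lt I))
    (G : Set (MvPolynomial (Fin n) K)) (hG : IsReducedGB lt I G)
    (ℓ : Fin n) (m : Fin n →₀ ℕ)
    (hm1 : ∀ k : Fin n, ℓ ≤ k → m k = 0)
    (hm2 : m ∉ LMset lt I) :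
    ∃ α : ℕ, 1 ≤ α ∧
      (m + Finsupp.single ℓ α) ∈ LMset lt I ∧
      (∀ β : ℕ, β < α → m + Finsupp.single ℓ β ∉ LMset lt I) ∧
      ∃ g ∈ G, IsLM lt g (m + Finsupp.single ℓ α) ∧
        (∀ k : Fin n, ℓ < k → (m + Finsupp.single ℓ α) k = 0) ∧
        (m + Finsupp.single ℓ α) ℓ ≠ 0 := by
  classical
  obtain ⟨p, hpI, hp0, hpshape⟩ := exists_pow_LMaux lt I hI ℓ
  obtain ⟨μ0, hμ0⟩ := exists_isLM_aux hlin htrans p hp0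
  obtain ⟨N, hNeq⟩ := hpshape μ0 hμ0.1
  have hN : (m + Finsupp.single ℓ N) ∈ LMset lt I := by
    have h0 : Finsupp.single ℓ N ∈ LMset lt I := ⟨p, hpI, hNeq ▸ hμ0⟩
    simpa [add_comm] using LMset_add_aux hadd h0 m
  have hex : ∃ β, m + Finsupp.single ℓ β ∈ LMset lt I := ⟨N, hN⟩
  set α := Nat.find hex with hαdef
  have hPα : m + Finsupp.single ℓ α ∈ LMset lt I := Nat.find_spec hex
  have hmin : ∀ β, β < α → m + Finsupp.single ℓ β ∉ LMset lt I :=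
    fun β hβ => Nat.find_min hex hβ
  have hα1 : 1 ≤ α := by
    rcases Nat.eq_zero_or_pos α with h | h
    · exfalso
      apply hm2
      have h2 := hPα
      rw [h] at h2
      simpa using h2
    · exact h
  refine ⟨α, hα1, hPα, hmin, ?_⟩
  obtain ⟨f, hfI, hf⟩ := hPα
  have hfne : f ≠ 0 := by
    intro h
    rw [h] at hf
    simpa using hf.1
  obtain ⟨g, hgG, μ, ν, hgμ, hfν, hle⟩ := hG.2.2.1 f hfI hfne
  have hνeq : ν = m + Finsupp.single ℓ α := isLM_unique_aux hirr htrans hfν hf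
  rw [hνeq] at hle
  have hgI := hG.2.1 g hgG
  have hμLM : μ ∈ LMset lt I := ⟨g, hgI.2, hgμ⟩
  have hlek : ∀ k, μ k ≤ (m + Finsupp.single ℓ α) k := Finsupp.le_def.1 hle
  have hμℓ : μ ℓ = α := by
    by_contra hne
    have hlt : μ ℓ < α := by
      have := hlek ℓ
      rw [Finsupp.add_apply, Finsupp.single_eq_same, hm1 ℓ le_rfl, zero_add] at this
      omega
    apply hmin (μ ℓ) hlt
    have hle2 : μ ≤ m + Finsupp.single ℓ (μ ℓ) := by
      rw [Finsupp.le_def]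
      intro k
      by_cases hk : k = ℓ
      · subst hk; simp
      · have := hlek k
        rw [Finsupp.add_apply, Finsupp.single_apply, if_neg (fun h => hk h.symm)] at this
        rw [Finsupp.add_apply, Finsupp.single_apply, if_neg (fun h => hk h.symm)]
        exact this
    obtain ⟨δ, hδ⟩ := le_iff_exists_add.1 hle2
    rw [hδ]
    exact LMset_add_aux hadd hμLM δ
  have hμj : ∀ j, j ≠ ℓ → μ j = m j := by
    intro j hj
    rcases lt_trichotomy j ℓ with hjl | hje | hjg
    · by_contra hne
      have hjle : μ j ≤ m j := by
        have := hlek j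
        rwa [Finsupp.add_apply, Finsupp.single_apply, if_neg (fun h => hj h.symm),
          add_zero] at this
      have hjlt : μ j < m j := lt_of_le_of_ne hjle hne
      have hst := hstable μ hμLM ℓ (by rw [hμℓ]; omega) j hjl
      have hle3 : μ - Finsupp.single ℓ 1 + Finsupp.single j 1 ≤
          m + Finsupp.single ℓ (α - 1) := by
        rw [Finsupp.le_def]
        intro k
        rw [Finsupp.add_apply, Finsupp.tsub_apply, Finsupp.add_apply]
        by_cases hk1 : k = ℓ
        · subst hk1
          rw [Finsupp.single_eq_same, Finsupp.single_eq_same,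
            Finsupp.single_apply, if_neg hj, hμℓ, hm1 k le_rfl]
          omega
        · rw [Finsupp.single_eq_of_ne' (fun h => hk1 h.symm),
            Finsupp.single_eq_of_ne' (fun h => hk1 h.symm)]
          by_cases hk2 : k = j
          · subst hk2
            rw [Finsupp.single_eq_same]
            omega
          · rw [Finsupp.single_eq_of_ne' (fun h => hk2 h.symm)]
            have := hlek k
            rw [Finsupp.add_apply, Finsupp.single_apply,
              if_neg (fun h => hk1 h.symm), add_zero] at this
            omega
      obtain ⟨δ, hδ⟩ := le_iff_exists_add.1 hle3
      apply hmin (α - 1) (by omega)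
      rw [hδ]
      exact LMset_add_aux hadd hst δ
    · exact absurd hje hj
    · have h1 : m j = 0 := hm1 j (le_of_lt hjg)
      have h2 := hlek j
      rw [Finsupp.add_apply, Finsupp.single_apply, if_neg (fun h => hj h.symm),
        add_zero, h1, Nat.le_zero] at h2
      rw [h1, h2]
  have hμeq : μ = m + Finsupp.single ℓ α := by
    ext k
    rw [Finsupp.add_apply]
    by_cases hk : k = ℓ
    · subst hk
      rw [Finsupp.single_eq_same, hm1 k le_rfl, zero_add, hμℓ]
    · rw [Finsupp.single_apply, if_neg (fun h => hk h.symm), add_zero, hμj k hk]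
  refine ⟨g, hgG, hμeq ▸ hgμ, ?_, ?_⟩
  · intro k hk
    rw [Finsupp.add_apply, hm1 k (le_of_lt hk), Finsupp.single_apply,
      if_neg (fun h => (ne_of_gt hk) h.symm), add_zero]
  · rw [Finsupp.add_apply, Finsupp.single_eq_same, hm1 ℓ le_rfl, zero_add]
    omega
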